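/- Let α be an irrational real number with 0 < α < 1/2, and let ψ ∈ ⟨ψ₁,ψ₃⟩ be a morphism that fixes the characteristic word c_α. Let ψ̃ be the time reversal of ψ, i.e., the morphism with ψ̃(0) = reverse(ψ(0)) and ψ̃(1) = reverse(ψ(1)). Then the morphism ψ̃² = ψ̃∘ψ̃ fixes both Sturmian words s_{α,1−α} and s'_{α,1−α}. -/

import Mathlib

/-- A morphism of the free monoid `{0,1}*`, determined by the images of the two
letters (`false` encodes the letter 0, `true` encodes the letter 1). -/
abbrev Morph := Bool → List Bool

/-- The identity morphism. -/
def idm : Morph := fun a => [a]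

/-- Composition of morphisms: `(M σ τ)(a) = σ(τ(a))`. -/
def M (σ τ : Morph) : Morph := fun a => (τ a).flatMap σ

/-- `compAll g [i₁, …, iₙ] = g i₁ ∘ g i₂ ∘ ⋯ ∘ g iₙ` (the identity for `n = 0`). -/
def compAll (g : Bool → Morph) (l : List Bool) : Morph :=
  l.foldr (fun i acc => M (g i) acc) idm

/-- Iterated composition of a morphism with itself. -/
def mpow (σ : Morph) : ℕ → Morph
  | 0 => idm
  | k + 1 => M σ (mpow σ k)

/-- The length-`n` prefix of an infinite word. -/
def wpref (w : ℕ → Bool) (n : ℕ) : List Bool := (List.range n).map w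

/-- `σ` fixes the infinite word `w`: for every `n`, the finite word
`σ(w(0))σ(w(1))⋯σ(w(n-1))` is a prefix of `w`. -/
def Fixes (σ : Morph) (w : ℕ → Bool) : Prop :=
  ∀ n : ℕ, (wpref w n).flatMap σ = wpref w ((wpref w n).flatMap σ).length

/-- The integer value `⌊(n+1)α + ρ⌋ - ⌊nα + ρ⌋` of the Sturmian word `s_{α,ρ}`. -/
noncomputable def sfl (α ρ : ℝ) (n : ℕ) : ℤ :=
  ⌊((n : ℝ) + 1) * α + ρ⌋ - ⌊(n : ℝ) * α + ρ⌋

/-- The integer value `⌈(n+1)α + ρ⌉ - ⌈nα + ρ⌉` of the Sturmian word `s'_{α,ρ}`. -/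
noncomputable def scl (α ρ : ℝ) (n : ℕ) : ℤ :=
  ⌈((n : ℝ) + 1) * α + ρ⌉ - ⌈(n : ℝ) * α + ρ⌉

/-- The Sturmian word `s_{α,ρ}` as an infinite binary word. -/
noncomputable def sw (α ρ : ℝ) : ℕ → Bool := fun n => decide (sfl α ρ n = 1)

/-- The Sturmian word `s'_{α,ρ}` as an infinite binary word. -/
noncomputable def sw' (α ρ : ℝ) : ℕ → Bool := fun n => decide (scl α ρ n = 1)

/-- The characteristic word `c_α = s_{α,α}`. -/
noncomputable def cw (α : ℝ) : ℕ → Bool := sw α α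

/-- `ψ₁ : 0 → 01, 1 → 0` (the Fibonacci morphism, `φ₁`). -/
def psi1 : Morph := fun a => match a with | false => [false, true] | true => [false]

/-- `ψ₃ : 0 → 0, 1 → 01` (the morphism `G`, i.e. `φ₀`). -/
def psi3 : Morph := fun a => match a with | false => [false] | true => [false, true]

/-- `ψ₄ : 0 → 0, 1 → 10`. -/
def psi4 : Morph := fun a => match a with | false => [false] | true => [true, false]

/-- `ψ₇ : 0 → 10, 1 → 1`. -/
def psi7 : Morph := fun a => match a with | false => [true, false] | true => [true]

/-- `ψ₈ : 0 → 01, 1 → 1`. -/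
def psi8 : Morph := fun a => match a with | false => [false, true] | true => [true]

/-- Time reversal of a morphism. -/
def trev (σ : Morph) : Morph := fun a => (σ a).reverse

/-- The exchange morphism `E : 0 → 1, 1 → 0`. -/
def Em : Morph := fun a => [!a]

/-- Generators `φ₀, φ₁` indexed by a bit: `false ↦ φ₀ (= ψ₃)`, `true ↦ φ₁ (= ψ₁)`. -/
def phiGen : Bool → Morph := fun b => match b with | false => psi3 | true => psi1

/-- Generators of `⟨ψ₁, ψ₃⟩`: `false` encodes the index 1 (`ψ₁`),
`true` encodes the index 3 (`ψ₃`). -/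
def g13 : Bool → Morph := fun b => match b with | false => psi1 | true => psi3

/-- Generators of `⟨ψ₃, ψ₈⟩`: `false ↦ ψ₃`, `true ↦ ψ₈`. -/
def g38 : Bool → Morph := fun b => match b with | false => psi3 | true => psi8

/-- Generators of `⟨ψ₄, ψ₇⟩`: `false ↦ ψ₄`, `true ↦ ψ₇`. -/
def g47 : Bool → Morph := fun b => match b with | false => psi4 | true => psi7

/-- The Kepler matrices `K₀ = [[1,0],[1,1]]` and `K₁ = [[0,1],[1,1]]`. -/
def K : Bool → Matrix (Fin 2) (Fin 2) ℕ
  | false => !![1, 0; 1, 1]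
  | true => !![0, 1; 1, 1]

namespace SturmRev

def pre2 (x0 x1 : Bool) (c : ℕ → Bool) : ℕ → Bool :=
  fun n => match n with | 0 => x0 | 1 => x1 | (k+2) => c k

def Conj (σ : Morph) (z : List Bool) : Prop :=
  ∀ a : Bool, σ a ++ z = z ++ (σ a).reverse

def PairP (σ : Morph) (z : List Bool) : Prop :=
  (σ false ++ σ true = z.reverse ++ [false, true] ∧
     σ true ++ σ false = z.reverse ++ [true, false]) ∨
  (σ false ++ σ true = z.reverse ++ [true, false] ∧
     σ true ++ σ false = z.reverse ++ [false, true])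

lemma rev_flatMap (σ : Morph) (u : List Bool) :
    (u.flatMap σ).reverse = u.reverse.flatMap (trev σ) := by
  rw [List.reverse_flatMap]; rfl

lemma conj_words {σ : Morph} {z : List Bool} (h : Conj σ z) :
    ∀ u : List Bool, u.flatMap σ ++ z = z ++ u.flatMap (trev σ) := by
  intro u
  induction u with
  | nil => simp
  | cons a u ih =>
    simp only [List.flatMap_cons, List.append_assoc]
    rw [ih, ← List.append_assoc, h a, List.append_assoc]
    rfl

lemma conj_gen (i : Bool) : Conj (g13 i) [false] := by
  intro a; cases i <;> cases a <;> rfl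

lemma pair_step (σ : Morph) (hcσ : Conj σ [false]) (z' R : List Bool) (a₁ a₂ : Bool)
    (hR : σ a₁ ++ σ a₂ = [false] ++ R) :
    (z'.reverse ++ [a₁, a₂]).flatMap σ = (z'.flatMap σ ++ [false]).reverse ++ R := by
  have h1 : ([a₁, a₂] : List Bool).flatMap σ = [false] ++ R := by
    simp only [List.flatMap_cons, List.flatMap_nil, List.append_nil]
    exact hR
  rw [List.flatMap_append, h1, List.reverse_append, rev_flatMap]
  have h2 : z'.reverse.flatMap σ ++ [false] = [false].reverse ++ (z'.flatMap σ).reverse := by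
    rw [rev_flatMap]
    exact conj_words hcσ z'.reverse
  rw [← List.append_assoc, h2]
  simp [List.append_assoc, rev_flatMap]

lemma std_ind (l : List Bool) (hl : l ≠ []) :
    ∃ z : List Bool, Conj (compAll g13 l) z ∧ PairP (compAll g13 l) z := by
  induction l with
  | nil => exact absurd rfl hl
  | cons i l ih =>
    rcases eq_or_ne l [] with rfl | hne
    · refine ⟨[false], ?_, ?_⟩
      · intro a; cases i <;> cases a <;> rfl
      · cases i
        · right; constructor <;> rfl
        · left; constructor <;> rfl
    · obtain ⟨z', hc', hp'⟩ := ih hne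
      set τ := compAll g13 l with hτ
      set σ := g13 i with hσ
      have hcσ : Conj σ [false] := conj_gen i
      refine ⟨z'.flatMap σ ++ [false], ?_, ?_⟩
      · -- Conj
        intro a
        show (τ a).flatMap σ ++ (z'.flatMap σ ++ [false])
            = (z'.flatMap σ ++ [false]) ++ ((τ a).flatMap σ).reverse
        rw [rev_flatMap]
        calc (τ a).flatMap σ ++ (z'.flatMap σ ++ [false])
            = (τ a ++ z').flatMap σ ++ [false] := by
              rw [List.flatMap_append, List.append_assoc]
          _ = (z' ++ (τ a).reverse).flatMap σ ++ [false] := by rw [hc' a]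
          _ = z'.flatMap σ ++ ((τ a).reverse.flatMap σ ++ [false]) := by
              rw [List.flatMap_append, List.append_assoc]
          _ = z'.flatMap σ ++ ([false] ++ (τ a).reverse.flatMap (trev σ)) := by
              rw [conj_words hcσ]
          _ = (z'.flatMap σ ++ [false]) ++ (τ a).reverse.flatMap (trev σ) := by
              rw [List.append_assoc]
      · -- PairP
        have e01 : (compAll g13 (i :: l)) false ++ (compAll g13 (i :: l)) true
            = (τ false ++ τ true).flatMap σ := by
          show (τ false).flatMap σ ++ (τ true).flatMap σ = _
          rw [List.flatMap_append]
        have e10 : (compAll g13 (i :: l)) true ++ (compAll g13 (i :: l)) false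
            = (τ true ++ τ false).flatMap σ := by
          show (τ true).flatMap σ ++ (τ false).flatMap σ = _
          rw [List.flatMap_append]
        rcases hp' with ⟨h01, h10⟩ | ⟨h01, h10⟩ <;> cases i
        -- disj1, i = false : σ = ψ₁ (swaps)
        · right
          constructor
          · rw [e01, h01, pair_step σ hcσ z' [true, false] false true (by rw [hσ]; rfl)]
          · rw [e10, h10, pair_step σ hcσ z' [false, true] true false (by rw [hσ]; rfl)]
        -- disj1, i = true : σ = ψ₃ (keeps)
        · left
          constructor
          · rw [e01, h01, pair_step σ hcσ z' [false, true] false true (by rw [hσ]; rfl)]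
          · rw [e10, h10, pair_step σ hcσ z' [true, false] true false (by rw [hσ]; rfl)]
        -- disj2, i = false
        · left
          constructor
          · rw [e01, h01, pair_step σ hcσ z' [false, true] true false (by rw [hσ]; rfl)]
          · rw [e10, h10, pair_step σ hcσ z' [true, false] false true (by rw [hσ]; rfl)]
        -- disj2, i = true
        · right
          constructor
          · rw [e01, h01, pair_step σ hcσ z' [true, false] true false (by rw [hσ]; rfl)]
          · rw [e10, h10, pair_step σ hcσ z' [false, true] false true (by rw [hσ]; rfl)]




lemma length_wpref (w : ℕ → Bool) (n : ℕ) : (wpref w n).length = n := by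
  simp [wpref]

lemma wpref_add (w : ℕ → Bool) (m n : ℕ) :
    wpref w (m + n) = wpref w m ++ (List.range n).map (fun i => w (m + i)) := by
  simp [wpref, List.range_add, List.map_map]

lemma wpref_take (w : ℕ → Bool) {m n : ℕ} (h : m ≤ n) :
    (wpref w n).take m = wpref w m := by
  simp [wpref, ← List.map_take, List.take_range, Nat.min_eq_left h]

lemma isP_of_append {w : ℕ → Bool} {l s : List Bool} {n : ℕ}
    (h : l ++ s = wpref w n) : l = wpref w l.length := by
  have hn : l.length ≤ n := by
    have := congrArg List.length h
    simp [length_wpref] at this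
    omega
  calc l = (l ++ s).take l.length := by rw [List.take_left]
    _ = (wpref w n).take l.length := by rw [h]
    _ = wpref w l.length := wpref_take _ hn

lemma len_le_flatMap (σ : Morph) (h : ∀ a, σ a ≠ []) (u : List Bool) :
    u.length ≤ (u.flatMap σ).length := by
  induction u with
  | nil => simp
  | cons a u ih =>
    simp only [List.flatMap_cons, List.length_append, List.length_cons]
    have : 1 ≤ (σ a).length := List.length_pos_iff.mpr (h a)
    omega

lemma fixes_comp {σ τ : Morph} {w : ℕ → Bool} (hσ : Fixes σ w) (hτ : Fixes τ w) :
    Fixes (M σ τ) w := by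
  intro n
  have h1 : (wpref w n).flatMap (M σ τ) = ((wpref w n).flatMap τ).flatMap σ :=
    by rw [List.flatMap_assoc]; rfl
  rw [h1, hτ n]
  exact hσ _

lemma M_ne {σ τ : Morph} (hσ : ∀ a, σ a ≠ []) (hτ : ∀ a, τ a ≠ []) :
    ∀ a, M σ τ a ≠ [] := by
  intro a
  show (τ a).flatMap σ ≠ []
  rw [Ne, List.flatMap_eq_nil_iff]
  push_neg
  obtain ⟨b, hb⟩ := List.exists_mem_of_ne_nil _ (hτ a)
  exact ⟨b, hb, hσ b⟩

lemma nonerasing (l : List Bool) : ∀ a, compAll g13 l a ≠ [] := by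
  induction l with
  | nil => intro a; simp [compAll, idm]
  | cons i l ih =>
    intro a
    show (compAll g13 l a).flatMap (g13 i) ≠ []
    rw [Ne, List.flatMap_eq_nil_iff]
    push_neg
    obtain ⟨b, hb⟩ := List.exists_mem_of_ne_nil _ (ih a)
    refine ⟨b, hb, ?_⟩
    cases i <;> cases b <;> simp [g13, psi1, psi3]

lemma main_gen (c : ℕ → Bool) (σ' σt : Morph) (Z : List Bool)
    (hfx : Fixes σ' c) (hne : ∀ a, σ' a ≠ [])
    (hconj : ∀ u : List Bool, u.flatMap σ' ++ Z = Z ++ u.flatMap σt)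
    (x0 x1 : Bool) (hx : ([x0, x1] : List Bool).flatMap σt = [x0, x1] ++ Z) :
    Fixes σt (pre2 x0 x1 c) := by
  set w : ℕ → Bool := pre2 x0 x1 c with hwdef
  have hw2 : ∀ k, wpref w (k + 2) = [x0, x1] ++ wpref c k := by
    intro k
    rw [show k + 2 = 2 + k by omega, wpref_add w 2 k]
    have e1 : wpref w 2 = [x0, x1] := by simp [wpref, List.range_succ, hwdef, pre2]
    have e2 : (List.range k).map (fun i => w (2 + i)) = (List.range k).map c := by
      apply List.map_congr_left
      intro i _
      show w (2 + i) = c i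
      rw [Nat.add_comm, hwdef]
      rfl
    rw [e1, e2]
    rfl
  have hZpref : ∀ k, ∃ L, Z ++ (wpref c k).flatMap σt = wpref c L := by
    intro k
    have hsplit : wpref c (k + Z.length)
        = wpref c k ++ (List.range Z.length).map (fun i => c (k + i)) := wpref_add c k Z.length
    set m := (List.range Z.length).map (fun i => c (k + i)) with hm
    have hlenm : m.length = Z.length := by simp [hm]
    have h1 := hconj (wpref c (k + Z.length))
    rw [hsplit, List.flatMap_append, List.flatMap_append] at h1
    have h2 := hfx (k + Z.length)
    rw [hsplit, List.flatMap_append] at h2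
    set A := (wpref c k).flatMap σ' with hA
    set B := m.flatMap σ' with hB
    -- h2 : A ++ B = wpref c (A ++ B).length
    have hAt : ((wpref c k).flatMap σt).length = A.length := by
      have h := congrArg List.length (hconj (wpref c k))
      rw [List.length_append, List.length_append, ← hA] at h
      omega
    have hBm : Z.length ≤ B.length := by
      rw [hB, ← hlenm]; exact len_le_flatMap σ' hne m
    have hle : (Z ++ (wpref c k).flatMap σt).length ≤ (A ++ B).length := by
      rw [List.length_append, List.length_append, hAt]
      omega
    have h3 : (Z ++ (wpref c k).flatMap σt) ++ m.flatMap σt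
        = wpref c (A ++ B).length ++ Z := by
      rw [← h2, List.append_assoc, ← h1]
    refine ⟨(Z ++ (wpref c k).flatMap σt).length, ?_⟩
    calc Z ++ (wpref c k).flatMap σt
        = ((Z ++ (wpref c k).flatMap σt) ++ m.flatMap σt).take
            (Z ++ (wpref c k).flatMap σt).length := by rw [List.take_left]
      _ = (wpref c (A ++ B).length ++ Z).take (Z ++ (wpref c k).flatMap σt).length := by
          rw [h3]
      _ = (wpref c (A ++ B).length).take (Z ++ (wpref c k).flatMap σt).length :=
          List.take_append_of_le_length (by rw [length_wpref]; exact hle)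
      _ = wpref c (Z ++ (wpref c k).flatMap σt).length := wpref_take _ hle
  have hk2 : ∀ k, (wpref w (k + 2)).flatMap σt
      = wpref w ((wpref w (k + 2)).flatMap σt).length := by
    intro k
    rw [hw2 k, List.flatMap_append, hx, List.append_assoc]
    obtain ⟨L, hL⟩ := hZpref k
    rw [hL]
    have hlen : (([x0, x1] : List Bool) ++ wpref c L).length = L + 2 := by
      simp [length_wpref]
      try omega
    rw [hlen]
    exact (hw2 L).symm
  intro n
  match n with
  | 0 => simp [wpref]
  | 1 =>
    have hsplit : wpref w (0 + 2) = wpref w 1 ++ [w 1] := by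
      have e : (0:ℕ) + 2 = 1 + 1 := rfl
      rw [e, wpref_add w 1 1]
      simp [List.range_succ]
    have h := hk2 0
    rw [hsplit, List.flatMap_append] at h
    exact isP_of_append h
  | (k+2) => exact hk2 k



lemma ceil_irr (x : ℝ) (hx : Irrational x) : ⌈x⌉ = ⌊x⌋ + 1 := by
  refine le_antisymm (Int.ceil_le_floor_add_one x) ?_
  have h1 : (⌊x⌋ : ℝ) < x :=
    lt_of_le_of_ne (Int.floor_le x) (Ne.symm (hx.ne_int ⌊x⌋))
  have h2 : (⌊x⌋ : ℝ) < (⌈x⌉ : ℝ) := lt_of_lt_of_le h1 (Int.le_ceil x)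
  have : ⌊x⌋ < ⌈x⌉ := by exact_mod_cast h2
  omega

lemma sw_eq (α : ℝ) (hirr : Irrational α) (h0 : 0 < α) (h2 : α < 1 / 2) :
    sw α (1 - α) = pre2 true false (cw α) := by
  have h1 : α < 1 := by linarith
  funext n
  match n with
  | 0 =>
    show decide (sfl α (1 - α) 0 = 1) = true
    have e1 : (((0:ℕ) : ℝ) + 1) * α + (1 - α) = 1 := by push_cast; ring
    have e2 : ((0:ℕ) : ℝ) * α + (1 - α) = 1 - α := by push_cast; ring
    have hv : sfl α (1 - α) 0 = 1 := by
      unfold sfl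
      rw [e1, e2, Int.floor_one,
        Int.floor_eq_zero_iff.mpr (Set.mem_Ico.mpr ⟨by linarith, by linarith⟩)]
      ring
    rw [hv]; rfl
  | 1 =>
    show decide (sfl α (1 - α) 1 = 1) = false
    have e1 : (((1:ℕ) : ℝ) + 1) * α + (1 - α) = α + 1 := by push_cast; ring
    have e2 : ((1:ℕ) : ℝ) * α + (1 - α) = 1 := by push_cast; ring
    have hv : sfl α (1 - α) 1 = 0 := by
      unfold sfl
      rw [e1, e2, Int.floor_one, Int.floor_add_one,
        Int.floor_eq_zero_iff.mpr (Set.mem_Ico.mpr ⟨by linarith, by linarith⟩)]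
      ring
    rw [hv]; rfl
  | (k+2) =>
    show decide (sfl α (1 - α) (k+2) = 1) = decide (sfl α α k = 1)
    have hv : sfl α (1 - α) (k+2) = sfl α α k := by
      unfold sfl
      have e1 : (((k+2:ℕ) : ℝ) + 1) * α + (1 - α) = (((k:ℕ):ℝ) + 1) * α + α + 1 := by
        push_cast; ring
      have e2 : ((k+2:ℕ) : ℝ) * α + (1 - α) = ((k:ℕ):ℝ) * α + α + 1 := by
        push_cast; ring
      rw [e1, e2, Int.floor_add_one, Int.floor_add_one]
      ring
    rw [hv]

lemma sw'_eq (α : ℝ) (hirr : Irrational α) (h0 : 0 < α) (h2 : α < 1 / 2) :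
    sw' α (1 - α) = pre2 false true (cw α) := by
  have h1 : α < 1 := by linarith
  funext n
  match n with
  | 0 =>
    show decide (scl α (1 - α) 0 = 1) = false
    have e1 : (((0:ℕ) : ℝ) + 1) * α + (1 - α) = 1 := by push_cast; ring
    have e2 : ((0:ℕ) : ℝ) * α + (1 - α) = 1 - α := by push_cast; ring
    have hv : scl α (1 - α) 0 = 0 := by
      unfold scl
      have c1 : ⌈(1 - α : ℝ)⌉ = (1 : ℤ) := by
        rw [Int.ceil_eq_iff]
        constructor
        · push_cast; linarith
        · push_cast; linarith
      rw [e1, e2, Int.ceil_one, c1]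
      ring
    rw [hv]; rfl
  | 1 =>
    show decide (scl α (1 - α) 1 = 1) = true
    have e1 : (((1:ℕ) : ℝ) + 1) * α + (1 - α) = α + 1 := by push_cast; ring
    have e2 : ((1:ℕ) : ℝ) * α + (1 - α) = 1 := by push_cast; ring
    have hv : scl α (1 - α) 1 = 1 := by
      unfold scl
      have c1 : ⌈(α : ℝ)⌉ = (1 : ℤ) := by
        rw [Int.ceil_eq_iff]
        constructor
        · push_cast; linarith
        · push_cast; linarith
      rw [e1, e2, Int.ceil_one, Int.ceil_add_one, c1]
      ring
    rw [hv]; rfl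
  | (k+2) =>
    show decide (scl α (1 - α) (k+2) = 1) = decide (sfl α α k = 1)
    have hv : scl α (1 - α) (k+2) = sfl α α k := by
      unfold scl sfl
      have e1 : (((k+2:ℕ) : ℝ) + 1) * α + (1 - α) = ((k+2:ℕ):ℝ) * α + 1 := by
        push_cast; ring
      have e2 : ((k+2:ℕ) : ℝ) * α + (1 - α) = ((k+1:ℕ):ℝ) * α + 1 := by
        push_cast; ring
      have i1 : Irrational (((k+2:ℕ):ℝ) * α) := hirr.natCast_mul (by omega)
      have i2 : Irrational (((k+1:ℕ):ℝ) * α) := hirr.natCast_mul (by omega)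
      have f1 : (((k:ℕ):ℝ) + 1) * α + α = ((k+2:ℕ):ℝ) * α := by push_cast; ring
      have f2 : ((k:ℕ):ℝ) * α + α = ((k+1:ℕ):ℝ) * α := by push_cast; ring
      rw [e1, e2, Int.ceil_add_one, Int.ceil_add_one, ceil_irr _ i1, ceil_irr _ i2,
        f1, f2]
      ring
    rw [hv]


lemma fixes_idm2 (w : ℕ → Bool) :
    Fixes (M (trev (compAll g13 [])) (trev (compAll g13 []))) w := by
  have hid : ∀ u : List Bool,
      u.flatMap (M (trev (compAll g13 [])) (trev (compAll g13 []))) = u := by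
    intro u
    induction u with
    | nil => rfl
    | cons a u ih => rw [List.flatMap_cons, ih]; rfl
  intro n
  rw [hid (wpref w n), length_wpref]

end SturmRev

/-- If `ψ ∈ ⟨ψ₁, ψ₃⟩` fixes the characteristic word `c_α`
(`α` irrational, `0 < α < 1/2`), then `ψ̃² = ψ̃ ∘ ψ̃`, where `ψ̃` is the time
reversal of `ψ`, fixes both `s_{α,1-α}` and `s'_{α,1-α}`. -/
theorem time_reversal_sq_fixes (α : ℝ) (hirr : Irrational α) (h0 : 0 < α) (h2 : α < 1 / 2)
    (ψ : Morph) (hmem : ∃ l : List Bool, ψ = compAll g13 l) (hfix : Fixes ψ (cw α)) :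
    Fixes (M (trev ψ) (trev ψ)) (sw α (1 - α)) ∧
    Fixes (M (trev ψ) (trev ψ)) (sw' α (1 - α)) := by
  obtain ⟨l, rfl⟩ := hmem
  rw [SturmRev.sw_eq α hirr h0 h2, SturmRev.sw'_eq α hirr h0 h2]
  rcases eq_or_ne l [] with rfl | hlne
  · exact ⟨SturmRev.fixes_idm2 _, SturmRev.fixes_idm2 _⟩
  · obtain ⟨z, hcz, hp⟩ := SturmRev.std_ind l hlne
    set ψ : Morph := compAll g13 l with hψ
    set ψt : Morph := trev ψ with hψt
    set Z : List Bool := z ++ z.flatMap ψt with hZ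
    have hfix2 : Fixes (M ψ ψ) (cw α) := SturmRev.fixes_comp hfix hfix
    have hne : ∀ a, ψ a ≠ [] := SturmRev.nonerasing l
    have hne2 : ∀ a, M ψ ψ a ≠ [] := SturmRev.M_ne hne hne
    have hwconj : ∀ u : List Bool, u.flatMap ψ ++ z = z ++ u.flatMap ψt :=
      SturmRev.conj_words hcz
    have hconj' : ∀ u : List Bool, u.flatMap (M ψ ψ) ++ Z = Z ++ u.flatMap (M ψt ψt) := by
      intro u
      have e1 : u.flatMap (M ψ ψ) = (u.flatMap ψ).flatMap ψ :=
        by rw [List.flatMap_assoc]; rfl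
      have e2 : u.flatMap (M ψt ψt) = (u.flatMap ψt).flatMap ψt :=
        by rw [List.flatMap_assoc]; rfl
      rw [e1, e2, hZ]
      calc (u.flatMap ψ).flatMap ψ ++ (z ++ z.flatMap ψt)
          = ((u.flatMap ψ).flatMap ψ ++ z) ++ z.flatMap ψt := by
            rw [List.append_assoc]
        _ = (z ++ (u.flatMap ψ).flatMap ψt) ++ z.flatMap ψt := by
            rw [hwconj (u.flatMap ψ)]
        _ = z ++ ((u.flatMap ψ) ++ z).flatMap ψt := by
            rw [List.flatMap_append, List.append_assoc]
        _ = z ++ (z ++ u.flatMap ψt).flatMap ψt := by rw [hwconj u]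
        _ = (z ++ z.flatMap ψt) ++ (u.flatMap ψt).flatMap ψt := by
            rw [List.flatMap_append, List.append_assoc]
    have hrev : ∀ a b : Bool, ψt a ++ ψt b = (ψ b ++ ψ a).reverse := by
      intro a b
      show (ψ a).reverse ++ (ψ b).reverse = _
      rw [List.reverse_append]
    have hx12 : ∀ (a b : Bool) (X : List Bool), ψ b ++ ψ a = z.reverse ++ X →
        ([a, b] : List Bool).flatMap ψt = X.reverse ++ z := by
      intro a b X h
      show ψt a ++ (ψt b ++ []) = _
      rw [List.append_nil, hrev, h, List.reverse_append, List.reverse_reverse]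
    have hxσ : ∀ (a b : Bool) (X : List Bool), ψ b ++ ψ a = z.reverse ++ X →
        ([a, b] : List Bool).flatMap (M ψt ψt) = (X.reverse ++ z).flatMap ψt := by
      intro a b X h
      show (ψt a).flatMap ψt ++ ((ψt b).flatMap ψt ++ []) = _
      rw [List.append_nil, ← List.flatMap_append, hrev, h, List.reverse_append,
        List.reverse_reverse]
    have rtf : ([true, false] : List Bool).reverse = [false, true] := rfl
    have rft : ([false, true] : List Bool).reverse = [true, false] := rfl
    have hx01 : ([false, true] : List Bool).flatMap (M ψt ψt) = [false, true] ++ Z ∧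
        ([true, false] : List Bool).flatMap (M ψt ψt) = [true, false] ++ Z := by
      rcases hp with ⟨h01, h10⟩ | ⟨h01, h10⟩
      · constructor
        · rw [hxσ false true _ h10, rtf, List.flatMap_append,
            hx12 false true _ h10, rtf, hZ, List.append_assoc]
        · rw [hxσ true false _ h01, rft, List.flatMap_append,
            hx12 true false _ h01, rft, hZ, List.append_assoc]
      · constructor
        · rw [hxσ false true _ h10, rft, List.flatMap_append,
            hx12 true false _ h01, rtf, hZ, List.append_assoc]
        · rw [hxσ true false _ h01, rtf, List.flatMap_append,
            hx12 false true _ h10, rft, hZ, List.append_assoc]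
    constructor
    · exact SturmRev.main_gen (cw α) (M ψ ψ) (M ψt ψt) Z hfix2 hne2 hconj'
        true false hx01.2
    · exact SturmRev.main_gen (cw α) (M ψ ψ) (M ψt ψt) Z hfix2 hne2 hconj'
        false true hx01.1
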